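/- arXiv:1203.6008 — 2 statements merged into one kernel-verified Lean document; each statement's English description precedes it below -/
import Mathlib

section
/- Let m₁, …, m_c ≥ 2 be integers, let G = ⊕_{i=1}^{c} ℤ/(3mᵢ²), and let M = lcm(3m₁, …, 3m_c). Then there is no finite abelian group H with M·H = 0 such that H ⊕ H is isomorphic to G. -/
lemma lcm_factorization_sup {ι : Type*} (s : Finset ι) (f : ι → ℕ)
    (hf : ∀ i ∈ s, f i ≠ 0) (p : ℕ) :
    (s.lcm f) ≠ 0 ∧ (s.lcm f).factorization p = s.sup (fun i => (f i).factorization p) := by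
  classical
  induction s using Finset.cons_induction with
  | empty => simp
  | cons a s ha ih =>
    have hfa : f a ≠ 0 := hf a (Finset.mem_cons_self a s)
    obtain ⟨h0, hfac⟩ := ih (fun i hi => hf i (Finset.mem_cons_of_mem hi))
    have hlcm : (Finset.cons a s ha).lcm f = Nat.lcm (f a) (s.lcm f) := by
      rw [Finset.cons_eq_insert, Finset.lcm_insert, lcm_eq_nat_lcm]
    constructor
    · rw [hlcm]
      exact Nat.lcm_ne_zero hfa h0
    · rw [hlcm, Finset.sup_cons, ← hfac]
      have := Nat.factorization_lcm hfa h0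
      rw [this]
      simp [Finsupp.sup_apply]

theorem stmt_3 (c : ℕ) (hc : 0 < c) (m : Fin c → ℕ) (hm : ∀ i, 2 ≤ m i) :
    ¬ ∃ (H : Type) (_ : AddCommGroup H) (_ : Finite H),
      (∀ h : H, (Finset.univ.lcm (fun i => 3 * m i)) • h = 0) ∧
      Nonempty ((H × H) ≃+ (∀ i : Fin c, ZMod (3 * (m i) ^ 2))) := by
  rintro ⟨H, _, _, hM, ⟨e⟩⟩
  set M : ℕ := Finset.univ.lcm (fun i => 3 * m i) with hMdef
  have hmne : ∀ i, m i ≠ 0 := fun i => by have := hm i; omega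
  have hfne : ∀ i ∈ (Finset.univ : Finset (Fin c)), 3 * m i ≠ 0 := fun i _ => by
    have := hm i; positivity
  -- every element of the product is killed by M
  have hM2 : ∀ h : H × H, M • h = 0 := by
    rintro ⟨x, y⟩
    rw [Prod.smul_mk, hM x, hM y]; rfl
  have hkill : ∀ g : (∀ i : Fin c, ZMod (3 * (m i) ^ 2)), M • g = 0 := by
    intro g
    have h2 : e (M • e.symm g) = e 0 := by rw [hM2]
    simpa using h2
  -- hence 3 * m i ^ 2 ∣ M for every i
  have hdvd : ∀ i : Fin c, 3 * (m i) ^ 2 ∣ M := by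
    intro i
    classical
    have := congrFun (hkill (Pi.single i (1 : ZMod (3 * (m i) ^ 2)))) i
    simp only [Pi.smul_apply, Pi.single_eq_same, Pi.zero_apply, nsmul_eq_mul, mul_one] at this
    exact (ZMod.natCast_eq_zero_iff M (3 * (m i) ^ 2)).mp this
  -- choose the prime p and an index maximizing v_p(m i)
  set i₀ : Fin c := ⟨0, hc⟩
  set p : ℕ := (m i₀).minFac with hpdef
  have hp : p.Prime := Nat.minFac_prime (by have := hm i₀; omega)
  obtain ⟨i, -, hi⟩ := Finset.exists_max_image (Finset.univ : Finset (Fin c))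
    (fun j => (m j).factorization p) ⟨i₀, Finset.mem_univ i₀⟩
  set k : ℕ := (m i).factorization p with hkdef
  have hk1 : 1 ≤ k := by
    have h0 : 1 ≤ (m i₀).factorization p :=
      (Nat.Prime.factorization_pos_of_dvd hp (hmne i₀) (Nat.minFac_dvd _))
    exact le_trans h0 (hi i₀ (Finset.mem_univ i₀))
  obtain ⟨hM0, hMfac⟩ := lcm_factorization_sup Finset.univ (fun i => 3 * m i) hfne p
  -- v_p(M) ≤ v_p(3) + k
  have hub : M.factorization p ≤ (3 : ℕ).factorization p + k := by
    rw [hMfac]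
    apply Finset.sup_le
    intro j _
    rw [Nat.factorization_mul (by norm_num) (hmne j), Finsupp.add_apply]
    exact Nat.add_le_add_left (hi j (Finset.mem_univ j)) _
  -- v_p(3 * m i ^ 2) ≤ v_p(M)
  have hlb : (3 * (m i) ^ 2).factorization p ≤ M.factorization p := by
    have := (Nat.factorization_le_iff_dvd (by have := hm i; positivity) hM0).mpr (hdvd i)
    exact this p
  rw [Nat.factorization_mul (by norm_num) (pow_ne_zero 2 (hmne i)),
    Nat.factorization_pow, Finsupp.add_apply, Finsupp.smul_apply] at hlb
  have : (3 : ℕ).factorization p + 2 * k ≤ (3 : ℕ).factorization p + k :=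
    le_trans hlb hub
  omega
end

section
/- Let A be an n×n integer matrix with det A ≠ 0 and set Q = −A·Aᵀ. Then, viewing A and Q as linear maps ℤⁿ → ℤⁿ, the image of Q is contained in the image of A, the quotient group im(A)/im(Q) has order |det A|, and the cokernel ℤⁿ/im(Q) has order (det A)². -/
open Matrix

private lemma mulVecLin_inj_aux {n : ℕ} (B : Matrix (Fin n) (Fin n) ℤ) (hB : B.det ≠ 0) :
    Function.Injective B.mulVecLin := by
  rw [← LinearMap.ker_eq_bot, Submodule.eq_bot_iff]
  intro x hx
  have hx' : B *ᵥ x = 0 := hx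
  have h2 : B.adjugate *ᵥ (B *ᵥ x) = 0 := by rw [hx', Matrix.mulVec_zero]
  rw [Matrix.mulVec_mulVec, Matrix.adjugate_mul, Matrix.smul_mulVec,
    Matrix.one_mulVec] at h2
  ext i
  have h3 := congrFun h2 i
  simp only [Pi.smul_apply, smul_eq_mul, Pi.zero_apply, mul_eq_zero] at h3
  rcases h3 with h | h
  · exact absurd h hB
  · exact h

private lemma card_coker_aux {n : ℕ} (B : Matrix (Fin n) (Fin n) ℤ) (hB : B.det ≠ 0) :
    Nat.card ((Fin n → ℤ) ⧸ LinearMap.range B.mulVecLin) = B.det.natAbs := by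
  classical
  set N := LinearMap.range B.mulVecLin with hN
  have hinj := mulVecLin_inj_aux B hB
  let e : (Fin n → ℤ) ≃ₗ[ℤ] N := LinearEquiv.ofInjective _ hinj
  obtain ⟨m, snf⟩ := N.smithNormalForm (Pi.basisFun ℤ (Fin n))
  obtain rfl : n = m := by
    have hc := card_eq_of_linearEquiv ℤ (snf.bN.equivFun.symm.trans e.symm)
    simpa using hc.symm
  -- index side
  have h1 : Nat.card ((Fin n → ℤ) ⧸ N) = N.toAddSubgroup.index := rfl
  have h2 := snf.toAddSubgroup_index_eq_pow_mul_prod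
  simp only [Fintype.card_fin, Nat.sub_self, pow_zero, one_mul,
    Ideal.span_singleton_toAddSubgroup_eq_zmultiples, Int.index_zmultiples] at h2
  -- determinant side
  let σ : Equiv.Perm (Fin n) := Equiv.ofBijective snf.f
    ((Finite.injective_iff_bijective).mp snf.f.injective)
  let e2 : (Fin n → ℤ) ≃ₗ[ℤ] N := snf.bM.equiv snf.bN (Equiv.refl _)
  have hd1 : N.subtype ∘ₗ (e : (Fin n → ℤ) →ₗ[ℤ] N) = B.mulVecLin := by
    refine LinearMap.ext fun x => ?_
    rfl
  have hdet1 : LinearMap.det (N.subtype ∘ₗ (e : (Fin n → ℤ) →ₗ[ℤ] N)) = B.det := by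
    rw [hd1]
    have : B.mulVecLin = Matrix.toLin' B := rfl
    rw [this, LinearMap.det_toLin']
  have hmat : LinearMap.toMatrix snf.bM snf.bM (N.subtype ∘ₗ (e2 : (Fin n → ℤ) →ₗ[ℤ] N))
      = (Matrix.diagonal snf.a).submatrix σ.symm id := by
    ext i j
    rw [LinearMap.toMatrix_apply]
    simp only [LinearMap.comp_apply, LinearEquiv.coe_coe, Submodule.coe_subtype, e2,
      Module.Basis.equiv_apply, Equiv.refl_apply]
    rw [snf.snf j]
    simp only [_root_.map_smul, Module.Basis.repr_self, Finsupp.smul_single, smul_eq_mul, mul_one,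
      Matrix.submatrix_apply, id_eq, Matrix.diagonal_apply]
    rw [Finsupp.single_apply]
    have hiff : σ.symm i = j ↔ snf.f j = i := by
      rw [Equiv.symm_apply_eq]
      exact eq_comm.trans (by simp [σ, Equiv.ofBijective_apply])
    by_cases h : snf.f j = i
    · have h2 : σ.symm i = j := hiff.mpr h
      simp [h, h2]
    · have h2 : ¬ σ.symm i = j := fun hh => h (hiff.mp hh)
      simp [h, h2]
  have hdet2 : (LinearMap.det (N.subtype ∘ₗ (e2 : (Fin n → ℤ) →ₗ[ℤ] N))).natAbs
      = (∏ i, (snf.a i).natAbs) := by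
    rw [← LinearMap.det_toMatrix snf.bM, hmat, Matrix.det_permute, Matrix.det_diagonal]
    have hprod : (∏ i, snf.a i).natAbs = ∏ i, (snf.a i).natAbs :=
      map_prod Int.natAbsHom snf.a Finset.univ
    rw [Int.natAbs_mul, hprod]
    rcases Int.units_eq_one_or (Equiv.Perm.sign σ.symm) with h | h <;> rw [h] <;> simp
  have hassoc := LinearMap.associated_det_comp_equiv N.subtype e e2
  have hna : B.det.natAbs = ∏ i, (snf.a i).natAbs := by
    rw [← hdet1, ← hdet2]
    exact Int.natAbs_eq_iff_associated.mpr hassoc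
  rw [h1, h2, hna]

theorem stmt_8 (n : ℕ) (A : Matrix (Fin n) (Fin n) ℤ) (hA : A.det ≠ 0)
    (Q : Matrix (Fin n) (Fin n) ℤ) (hQ : Q = -(A * A.transpose)) :
    LinearMap.range Q.mulVecLin ≤ LinearMap.range A.mulVecLin ∧
    Nat.card ((LinearMap.range A.mulVecLin) ⧸
        ((LinearMap.range Q.mulVecLin).comap (LinearMap.range A.mulVecLin).subtype))
      = A.det.natAbs ∧
    Nat.card ((Fin n → ℤ) ⧸ LinearMap.range Q.mulVecLin) = A.det.natAbs ^ 2 := by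
  subst hQ
  have hmv : (-(A * A.transpose)).mulVecLin = -((A * A.transpose).mulVecLin) := by
    refine LinearMap.ext fun x => ?_
    show (-(A * A.transpose)) *ᵥ x = -((A * A.transpose) *ᵥ x)
    exact Matrix.neg_mulVec x _
  have hrange : LinearMap.range (-(A * A.transpose)).mulVecLin
      = LinearMap.range (A * A.transpose).mulVecLin := by
    rw [hmv, LinearMap.range_neg]
  have hcomp : (A * A.transpose).mulVecLin = A.mulVecLin ∘ₗ A.transpose.mulVecLin := by
    rw [Matrix.mulVecLin_mul]
  have hle : LinearMap.range (-(A * A.transpose)).mulVecLin ≤ LinearMap.range A.mulVecLin := by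
    rw [hrange, hcomp]
    exact LinearMap.range_comp_le_range _ _
  have hAinj := mulVecLin_inj_aux A hA
  have hAT : A.transpose.det ≠ 0 := by rwa [Matrix.det_transpose]
  refine ⟨hle, ?_, ?_⟩
  · -- middle part
    let e : (Fin n → ℤ) ≃ₗ[ℤ] LinearMap.range A.mulVecLin :=
      LinearEquiv.ofInjective _ hAinj
    have hmap : (LinearMap.range A.transpose.mulVecLin).map (e : (Fin n → ℤ) →ₗ[ℤ] _)
        = (LinearMap.range (-(A * A.transpose)).mulVecLin).comap
            (LinearMap.range A.mulVecLin).subtype := by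
      ext x
      simp only [Submodule.mem_map, Submodule.mem_comap, Submodule.coe_subtype, hrange,
        LinearMap.mem_range]
      constructor
      · rintro ⟨y, ⟨z, rfl⟩, rfl⟩
        exact ⟨z, by simp [e, hcomp, LinearEquiv.ofInjective_apply]⟩
      · rintro ⟨z, hz⟩
        refine ⟨A.transpose.mulVecLin z, ⟨z, rfl⟩, ?_⟩
        apply Subtype.ext
        simp only [e, LinearEquiv.ofInjective_apply]
        rw [← hz, hcomp]
        rfl
    let eq := Submodule.Quotient.equiv (LinearMap.range A.transpose.mulVecLin)
      ((LinearMap.range (-(A * A.transpose)).mulVecLin).comap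
        (LinearMap.range A.mulVecLin).subtype) e hmap
    rw [← Nat.card_congr eq.toEquiv, card_coker_aux A.transpose hAT, Matrix.det_transpose]
  · rw [hrange, card_coker_aux (A * A.transpose)
      (by rw [Matrix.det_mul, Matrix.det_transpose]; exact mul_ne_zero hA hA),
      Matrix.det_mul, Matrix.det_transpose, Int.natAbs_mul, sq]
end
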